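/- Let δ > 0 and a ≥ 0 be real, v ∈ ℝ^{n−1}, M a real symmetric (n−1)×(n−1) matrix, and let S, T be lower triangular (n−1)×(n−1) real matrices satisfying SSᵀ − TTᵀ = M + (1/δ)vvᵀ. Define L₁ = [[√(δ+a), 0], [0, S]] and L₂ = [[√δ, 0], [−v/√δ, T]]. Then L₁ and L₂ are lower triangular and L₁L₁ᵀ − L₂L₂ᵀ = [[a, vᵀ], [v, M]]. -/

import Mathlib

open Matrix

/-- The natural ordering of the row/column indices of an `n×n` matrix presented in
block form with a `1×1` top-left block and an `(n-1)×(n-1)` bottom-right block. -/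
def blockIdx {m : ℕ} : Fin 1 ⊕ Fin m → ℕ := Sum.elim (fun _ => 0) (fun i => (i : ℕ) + 1)

/-- A block matrix is lower triangular if entries above the diagonal
(w.r.t. the natural index order) vanish. -/
def IsLowerTriBlock {m : ℕ} (L : Matrix (Fin 1 ⊕ Fin m) (Fin 1 ⊕ Fin m) ℝ) : Prop :=
  ∀ i j, blockIdx i < blockIdx j → L i j = 0

/-- Regularized difference-of-Cholesky step with the choice `v₁ = 0`: if `δ > 0`,
`a ≥ 0`, and `S`, `T` are lower triangular with `SSᵀ − TTᵀ = M + (1/δ)vvᵀ`, then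
`L₁ = [[√(δ+a), 0], [0, S]]` and `L₂ = [[√δ, 0], [−v/√δ, T]]` are lower triangular
and `L₁L₁ᵀ − L₂L₂ᵀ = [[a, vᵀ], [v, M]]`. -/
theorem chtwo_step_reg_v1_zero (m : ℕ) (δ a : ℝ) (hδ : 0 < δ) (ha : 0 ≤ a)
    (v : Fin m → ℝ)
    (M S T : Matrix (Fin m) (Fin m) ℝ) (hM : M.IsSymm)
    (hS : ∀ i j : Fin m, i < j → S i j = 0)
    (hT : ∀ i j : Fin m, i < j → T i j = 0)
    (hST : S * Sᵀ - T * Tᵀ = M + (1 / δ) • Matrix.vecMulVec v v) :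
    IsLowerTriBlock
      (Matrix.fromBlocks (Matrix.of fun (_ : Fin 1) (_ : Fin 1) => Real.sqrt (δ + a)) 0
        0 S) ∧
    IsLowerTriBlock
      (Matrix.fromBlocks (Matrix.of fun (_ : Fin 1) (_ : Fin 1) => Real.sqrt δ) 0
        (Matrix.of fun i (_ : Fin 1) => -v i / Real.sqrt δ) T) ∧
    (Matrix.fromBlocks (Matrix.of fun (_ : Fin 1) (_ : Fin 1) => Real.sqrt (δ + a)) 0
        0 S) *
      (Matrix.fromBlocks (Matrix.of fun (_ : Fin 1) (_ : Fin 1) => Real.sqrt (δ + a)) 0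
        0 S)ᵀ -
    (Matrix.fromBlocks (Matrix.of fun (_ : Fin 1) (_ : Fin 1) => Real.sqrt δ) 0
        (Matrix.of fun i (_ : Fin 1) => -v i / Real.sqrt δ) T) *
      (Matrix.fromBlocks (Matrix.of fun (_ : Fin 1) (_ : Fin 1) => Real.sqrt δ) 0
        (Matrix.of fun i (_ : Fin 1) => -v i / Real.sqrt δ) T)ᵀ =
      Matrix.fromBlocks (Matrix.of fun (_ : Fin 1) (_ : Fin 1) => a)
        (Matrix.of fun (_ : Fin 1) j => v j)
        (Matrix.of fun i (_ : Fin 1) => v i) M := by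
  have hsd : Real.sqrt δ ≠ 0 := ne_of_gt (Real.sqrt_pos.mpr hδ)
  have hmul1 : Real.sqrt (δ + a) * Real.sqrt (δ + a) = δ + a :=
    Real.mul_self_sqrt (by linarith)
  have hmul2 : Real.sqrt δ * Real.sqrt δ = δ := Real.mul_self_sqrt hδ.le
  have hSTij : ∀ i j, (S * Sᵀ) i j - (T * Tᵀ) i j = M i j + 1 / δ * (v i * v j) := by
    intro i j
    have := congrFun (congrFun hST i) j
    simpa [Matrix.sub_apply, Matrix.add_apply, Matrix.vecMulVec_apply] using this
  refine ⟨?_, ?_, ?_⟩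
  · rintro (i | i) (j | j) h <;> simp [blockIdx] at h ⊢
    exact hS i j (by exact_mod_cast (by omega : (i : ℕ) < j))
  · rintro (i | i) (j | j) h <;> simp [blockIdx] at h ⊢
    exact hT i j (by exact_mod_cast (by omega : (i : ℕ) < j))
  · ext (i | i) (j | j) <;>
      simp [Matrix.mul_apply, Matrix.sub_apply, Fintype.sum_sum_type, hmul1, hmul2,
        div_mul_eq_mul_div, mul_div_assoc]
    · field_simp
    · field_simp
    · have h := hSTij i j
      simp only [Matrix.mul_apply, Matrix.transpose_apply] at h
      have hv : -(v i * (-v j / Real.sqrt δ)) / Real.sqrt δ = 1 / δ * (v i * v j) := by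
        rw [← hmul2]; field_simp; rw [Real.sqrt_sq (Real.sqrt_nonneg _)]
      rw [hv]; linarith [h]
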